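/- For $k \ge 0$ let $\sigma = L^k M$ where $L(0)=0$, $L(1)=10$, $M(0)=01$, $M(1)=10$ are substitutions composed as maps on words. Then the limit word $\sigma(\overline{0})$ equals the periodic sequence $01\overline{0^k01}$, and for real $q_0, q_1 > 1$, the equation $q_1 \sum_{n=1}^\infty i_n/(q_{i_1}\cdots q_{i_n}) = 1$ with $(i_n) = 01\overline{0^k01}$ holds if and only if $q_1 = \frac{1}{q_0^k(q_0-1)}$ (assuming $q_0^k(q_0-1) < 1$ so that $q_1 > 1$). -/

import Mathlib

def Lsub : Bool → List Bool := fun b => cond b [true, false] [false]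

def Msub : Bool → List Bool := fun b => cond b [true, false] [false, true]

def Rsub : Bool → List Bool := fun b => cond b [true] [false, true]

/-- The image of an infinite sequence under a substitution (letterwise
concatenation); the `n`-th letter is well defined as soon as each letter image
is nonempty. -/
def subSeq (σ : Bool → List Bool) (u : ℕ → Bool) : ℕ → Bool :=
  fun n => (((List.range (n + 1)).map (fun j => σ (u j))).flatten).getD n false

noncomputable def piR (q0 q1 : ℝ) (i : ℕ → Bool) : ℝ :=
  ∑' k : ℕ, (cond (i k) 1 0 : ℝ) / ∏ j ∈ Finset.range (k + 1), (cond (i j) q1 q0)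

/-- Composition of substitutions: `(compSub σ τ) b` is the word `σ(τ(b))`. -/
def compSub (σ τ : Bool → List Bool) : Bool → List Bool := fun b => (τ b).flatMap σ

lemma replicate_bind_L (k : ℕ) :
    (List.replicate k false).flatMap Lsub = List.replicate k false := by
  induction k with
  | zero => rfl
  | succ k ih => simpa [List.replicate_succ, Lsub] using ih

lemma word_eq (k : ℕ) :
    ((compSub Lsub)^[k] Msub) false = false :: true :: List.replicate k false := by
  induction k with
  | zero => rfl
  | succ k ih =>
    rw [Function.iterate_succ_apply', compSub, ih]
    simp [Lsub, List.replicate_succ, replicate_bind_L]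

lemma join_replicate_getD (w : List Bool) (hw : 0 < w.length) :
    ∀ m n d, n < m * w.length →
      (List.replicate m w).flatten.getD n d = w.getD (n % w.length) d := by
  intro m
  induction m with
  | zero => intro n d h; omega
  | succ m ih =>
    intro n d h
    rw [List.replicate_succ,
      show ((w :: List.replicate m w).flatten : List Bool)
        = w ++ (List.replicate m w).flatten from rfl]
    rcases Nat.lt_or_ge n w.length with hn | hn
    · rw [List.getD_append _ _ _ _ hn, Nat.mod_eq_of_lt hn]
    · rw [List.getD_append_right _ _ _ _ hn, ih _ _ (by
        have h2 : n - w.length + w.length = n := Nat.sub_add_cancel hn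
        have h3 : (m+1) * w.length = m * w.length + w.length := by ring
        omega)]
      congr 1
      conv_rhs => rw [← Nat.sub_add_cancel hn]
      rw [Nat.add_mod_right]

lemma word_getD (k r : ℕ) :
    (false :: true :: List.replicate k false).getD r false = decide (r = 1) := by
  match r with
  | 0 => rfl
  | 1 => rfl
  | (r+2) =>
    simp only [List.getD_cons_succ]
    have : (List.replicate k false).getD r false = false := by
      simp [List.getD, List.getElem?_replicate]; split <;> rfl
    simp [this]

lemma prod_formula (k : ℕ) (q0 q1 : ℝ) : ∀ t : ℕ,
    (∏ j ∈ Finset.range (t * (k+2) + 2), (cond (decide (j % (k+2) = 1)) q1 q0))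
      = q1 ^ (t+1) * q0 ^ (1 + t*(k+1)) := by
  intro t
  induction t with
  | zero =>
    have h1 : (1 : ℕ) % (k+2) = 1 := Nat.mod_eq_of_lt (by omega)
    simp [Finset.prod_range_succ, h1]
    ring
  | succ t ih =>
    have hsplit : (t+1) * (k+2) + 2 = (t * (k+2) + 2) + (k+2) := by ring
    rw [hsplit, Finset.prod_range_add, ih]
    have hmod : ∀ j : ℕ, (t*(k+2)+2+j) % (k+2) = (2+j) % (k+2) := by
      intro j
      rw [show t*(k+2)+2+j = 2+j + t*(k+2) by ring, Nat.add_mul_mod_self_right]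
    have hblock : (∏ j ∈ Finset.range (k+2),
        (cond (decide ((t * (k+2) + 2 + j) % (k+2) = 1)) q1 q0)) = q0 ^ (k+1) * q1 := by
      rw [Finset.prod_range_succ]
      have hlast : (t*(k+2)+2+(k+1)) % (k+2) = 1 := by
        rw [hmod, show 2+(k+1) = (k+2) + 1 by ring, Nat.add_mod_left,
          Nat.mod_eq_of_lt (by omega)]
      have hrest : (∏ j ∈ Finset.range (k+1),
          (cond (decide ((t * (k+2) + 2 + j) % (k+2) = 1)) q1 q0)) = q0 ^ (k+1) := by
        rw [Finset.prod_congr rfl (fun j hj => ?_), Finset.prod_const, Finset.card_range]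
        have hj' := Finset.mem_range.mp hj
        have : ¬ ((t*(k+2)+2+j) % (k+2) = 1) := by
          rw [hmod]
          rcases Nat.lt_or_ge j k with h | h
          · rw [Nat.mod_eq_of_lt (by omega)]; omega
          · have hjk : j = k := by omega
            rw [hjk, show 2+k = k+2 by ring, Nat.mod_self]; omega
        simp [this]
      rw [hrest, hlast]
      simp
    rw [hblock]
    ring

theorem stmt9 (k : ℕ) (q0 q1 : ℝ) (h0 : 1 < q0) (h1 : 1 < q1)
    (hk : q0 ^ k * (q0 - 1) < 1) :
    subSeq ((compSub Lsub)^[k] Msub) (fun _ => false) =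
      (fun n => decide (n % (k + 2) = 1)) ∧
    (q1 * piR q0 q1 (fun n => decide (n % (k + 2) = 1)) = 1 ↔
      q1 = 1 / (q0 ^ k * (q0 - 1))) := by
  constructor
  · funext n
    have hw := word_eq k
    have hlen : (false :: true :: List.replicate k false).length = k + 2 := by
      simp [List.length_replicate]
    show (((List.range (n + 1)).map
        (fun _ => ((compSub Lsub)^[k] Msub) false)).flatten).getD n false = _
    rw [hw, List.map_const', List.length_range,
      join_replicate_getD _ (by rw [hlen]; omega) _ _ _ (by rw [hlen]; nlinarith),
      hlen, word_getD]
  · -- the series computation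
    have hq0 : (0:ℝ) < q0 := by linarith
    have hq1 : (0:ℝ) < q1 := by linarith
    have hpow : (1:ℝ) ≤ q0 ^ (k+1) := one_le_pow₀ (le_of_lt h0)
    have hA : (1:ℝ) < q1 * q0 ^ (k+1) := by nlinarith
    have hApos : (0:ℝ) < q1 * q0 ^ (k+1) := by linarith
    set f : ℕ → ℝ := fun n =>
      (cond (decide (n % (k + 2) = 1)) 1 0 : ℝ) /
        ∏ j ∈ Finset.range (n + 1), (cond (decide (j % (k + 2) = 1)) q1 q0) with hf
    have hpiR : piR q0 q1 (fun n => decide (n % (k + 2) = 1)) = ∑' n, f n := rfl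
    have hinj : Function.Injective (fun t : ℕ => t * (k+2) + 1) := by
      intro a b h
      simp only [] at h
      have h2 : a * (k+2) = b * (k+2) := by omega
      exact Nat.eq_of_mul_eq_mul_right (by omega) h2
    have hsupp : Function.support f ⊆ Set.range (fun t : ℕ => t * (k+2) + 1) := by
      intro n hn
      by_contra hc
      apply hn
      have hmod : ¬ (n % (k+2) = 1) := by
        intro h
        apply hc
        refine ⟨n / (k+2), ?_⟩
        simp only []
        conv_rhs => rw [← Nat.div_add_mod n (k+2), h]
        ring
      simp [hf, hmod]
    have hval : ∀ t : ℕ, f (t * (k+2) + 1) =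
        (1 / (q1 * q0)) * ((q1 * q0 ^ (k+1))⁻¹) ^ t := by
      intro t
      have h1 : t * (k+2) + 1 + 1 = t * (k+2) + 2 := by ring
      have hm : (t * (k+2) + 1) % (k+2) = 1 := by
        rw [show t*(k+2)+1 = 1 + t*(k+2) by ring, Nat.add_mul_mod_self_right,
          Nat.mod_eq_of_lt (by omega)]
      rw [hf]
      simp only [h1, hm, prod_formula k q0 q1 t]
      show (1:ℝ) / (q1 ^ (t+1) * q0 ^ (1 + t*(k+1)))
        = (1 / (q1 * q0)) * ((q1 * q0 ^ (k+1))⁻¹) ^ t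
      rw [one_div, one_div, inv_pow, ← mul_inv]
      congr 1
      ring
    have htsum : (∑' n, f n) = (1 / (q1 * q0)) * (1 - (q1 * q0 ^ (k+1))⁻¹)⁻¹ := by
      rw [← hinj.tsum_eq hsupp]
      simp only [hval]
      rw [tsum_mul_left, tsum_geometric_of_lt_one (by positivity)
        (by rw [inv_lt_one_iff₀]; right; exact hA)]
    rw [hpiR, htsum]
    have hA1 : q1 * q0 ^ (k+1) - 1 ≠ 0 := by linarith
    have hinv1 : (1:ℝ) - (q1 * q0 ^ (k+1))⁻¹ ≠ 0 := by
      have : (q1 * q0 ^ (k+1))⁻¹ < 1 := by rw [inv_lt_one_iff₀]; right; exact hA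
      linarith
    have hD : (0:ℝ) < q0 ^ k * (q0 - 1) := by
      have := pow_pos hq0 k; nlinarith
    have key : q1 * ((1 / (q1 * q0)) * (1 - (q1 * q0 ^ (k+1))⁻¹)⁻¹)
        = (q1 * q0 ^ k) / (q1 * q0 ^ (k+1) - 1) := by
      rw [eq_div_iff hA1]
      field_simp
      ring
    rw [key, div_eq_one_iff_eq hA1]
    constructor
    · intro h
      rw [eq_div_iff (ne_of_gt hD)]
      have hp : q0 ^ (k+1) = q0 ^ k * q0 := pow_succ q0 k
      nlinarith [hp]
    · intro h
      rw [eq_div_iff (ne_of_gt hD)] at h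
      have hp : q0 ^ (k+1) = q0 ^ k * q0 := pow_succ q0 k
      nlinarith [hp]
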